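/- (Fejér monotonicity of the W-iterates.) Under the algorithm setup with Assumption 1, for every W ∈ ⋂_{n≥m₀} Fix(S_n) and every n ≥ m₀: ‖W_{n+1} − W‖_F² ≤ ‖W_n − W‖_F² − β_n(1 − β_n)‖W_n − S_n(W_n)‖_F²; in particular ‖W_{n+1} − W‖_F ≤ ‖W_n − W‖_F. -/
import Mathlib


open Matrix Filter

/-- Frobenius norm of a real matrix. -/
noncomputable def frob {m n : Type*} [Fintype m] [Fintype n] (X : Matrix m n ℝ) : ℝ :=
  Real.sqrt (∑ i, ∑ j, (X i j) ^ 2)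

/-- Frobenius inner product of two real matrices. -/
noncomputable def fip {m n : Type*} [Fintype m] [Fintype n] (X Y : Matrix m n ℝ) : ℝ :=
  ∑ i, ∑ j, X i j * Y i j

/-- Entrywise projection onto the nonnegative orthant. -/
def pplus {m n : Type*} (X : Matrix m n ℝ) : Matrix m n ℝ :=
  Matrix.of fun i j => max (X i j) 0

/-- Entrywise nonnegativity of a matrix. -/
def matNonneg {m n : Type*} (X : Matrix m n ℝ) : Prop := ∀ i j, 0 ≤ X i j

variable {m n k : Type*} [Fintype m] [Fintype n] [Fintype k]
lemma sq_le_imp_le {a b : ℝ} (hb : 0 ≤ b) (h : a ^ 2 ≤ b ^ 2) : a ≤ b := by nlinarith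
lemma frob_nonneg (X : Matrix m n ℝ) : 0 ≤ frob X := Real.sqrt_nonneg _
lemma frob_sq (X : Matrix m n ℝ) : frob X ^ 2 = ∑ i, ∑ j, (X i j) ^ 2 :=
  Real.sq_sqrt (by positivity)
lemma frob_sq_eq_fip (X : Matrix m n ℝ) : frob X ^ 2 = fip X X := by
  rw [frob_sq]; simp [fip, sq]
lemma frob_le_frob {X Y : Matrix m n ℝ} (h : ∀ i j, (X i j) ^ 2 ≤ (Y i j) ^ 2) :
    frob X ≤ frob Y :=
  Real.sqrt_le_sqrt (Finset.sum_le_sum fun i _ => Finset.sum_le_sum fun j _ => h i j)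
lemma fip_le (X Y : Matrix m n ℝ) : fip X Y ≤ frob X * frob Y := by
  have h := Real.sum_mul_le_sqrt_mul_sqrt (Finset.univ : Finset (m × n))
    (fun p => X p.1 p.2) (fun p => Y p.1 p.2)
  rw [Fintype.sum_prod_type, Fintype.sum_prod_type, Fintype.sum_prod_type] at h
  exact h
lemma frob_mul_le (X : Matrix m k ℝ) (Y : Matrix k n ℝ) :
    frob (X * Y) ≤ frob X * frob Y := by
  have h1 : frob (X * Y) ^ 2 ≤ (frob X * frob Y) ^ 2 := by
    rw [frob_sq, mul_pow, frob_sq, frob_sq]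
    calc ∑ i, ∑ j, ((X * Y) i j) ^ 2
        ≤ ∑ i, ∑ j, (∑ l, (X i l) ^ 2) * (∑ l, (Y l j) ^ 2) := by
          refine Finset.sum_le_sum fun i _ => Finset.sum_le_sum fun j _ => ?_
          simpa [Matrix.mul_apply] using
            Finset.sum_mul_sq_le_sq_mul_sq Finset.univ (fun l => X i l) (fun l => Y l j)
      _ = (∑ i, ∑ l, (X i l) ^ 2) * (∑ j, ∑ l, (Y l j) ^ 2) :=
          (Fintype.sum_mul_sum (fun i => ∑ l, (X i l) ^ 2) (fun j => ∑ l, (Y l j) ^ 2)).symm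
      _ = (∑ i, ∑ l, (X i l) ^ 2) * (∑ l, ∑ j, (Y l j) ^ 2) := by congr 1; exact Finset.sum_comm
  exact sq_le_imp_le (mul_nonneg (frob_nonneg _) (frob_nonneg _)) h1
lemma fip_mul_transpose {a b c : Type*} [Fintype a] [Fintype b] [Fintype c]
    (X : Matrix a b ℝ) (Y : Matrix a c ℝ) (Z : Matrix b c ℝ) :
    fip X (Y * Zᵀ) = fip (X * Z) Y := by
  simp only [fip, Matrix.mul_apply, Matrix.transpose_apply, Finset.mul_sum, Finset.sum_mul]
  rw [Finset.sum_congr rfl fun i _ => Finset.sum_comm]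
  ring_nf
  exact Finset.sum_congr rfl fun i _ => Finset.sum_congr rfl fun j _ =>
    Finset.sum_congr rfl fun l _ => by ring

lemma frob_sub_smul_sq (D G : Matrix m n ℝ) (t : ℝ) :
    frob (D - t • G) ^ 2 = frob D ^ 2 - 2 * t * fip D G + t ^ 2 * fip G G := by
  simp only [frob_sq, fip, Matrix.sub_apply, Matrix.smul_apply, smul_eq_mul,
    Finset.mul_sum, ← Finset.sum_sub_distrib, ← Finset.sum_add_distrib]
  exact Finset.sum_congr rfl fun i _ => Finset.sum_congr rfl fun j _ => by ring

lemma grad_nonexp (D : Matrix m k ℝ) (Hm : Matrix k n ℝ) (t : ℝ) (ht : 0 < t)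
    (ht2 : t ≤ 2 / frob (Hmᵀ * Hm)) :
    frob (D - t • ((D * Hm) * Hmᵀ)) ≤ frob D := by
  set c := frob (Hmᵀ * Hm) with hcdef
  have hc : 0 < c := by
    rcases eq_or_lt_of_le (frob_nonneg (Hmᵀ * Hm)) with h | h
    · exfalso; rw [hcdef, ← h, div_zero] at ht2; linarith
    · exact h
  have htc : t * c ≤ 2 := (le_div_iff₀ hc).mp ht2
  set E := D * Hm with hEdef
  set G := E * Hmᵀ with hGdef
  have h1 : fip D G = frob E ^ 2 := by
    rw [hGdef, fip_mul_transpose D E Hm, ← hEdef, frob_sq_eq_fip]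
  have h3 : fip G G ≤ c * frob E ^ 2 := by
    have h2 : fip G G = fip (E * (Hmᵀ * Hm)) E := by
      rw [hGdef, fip_mul_transpose G E Hm, hGdef, Matrix.mul_assoc]
    rw [h2]
    calc fip (E * (Hmᵀ * Hm)) E ≤ frob (E * (Hmᵀ * Hm)) * frob E := fip_le _ _
      _ ≤ (frob E * c) * frob E :=
          mul_le_mul_of_nonneg_right (frob_mul_le _ _) (frob_nonneg _)
      _ = c * frob E ^ 2 := by ring
  have key : frob (D - t • G) ^ 2 ≤ frob D ^ 2 := by
    rw [frob_sub_smul_sq, h1]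
    nlinarith [mul_le_mul_of_nonneg_left h3 (sq_nonneg t),
      mul_le_mul_of_nonneg_right htc (mul_nonneg ht.le (sq_nonneg (frob E)))]
  exact sq_le_imp_le (frob_nonneg D) key

lemma pplus_nonexp (X Y : Matrix m n ℝ) : frob (pplus X - pplus Y) ≤ frob (X - Y) :=
  frob_le_frob fun i j => by
    have h := abs_max_sub_max_le_abs (X i j) (Y i j) 0
    have : (pplus X - pplus Y) i j = max (X i j) 0 - max (Y i j) 0 := by
      simp [pplus, Matrix.sub_apply]
    rw [this, Matrix.sub_apply, ← sq_abs, ← sq_abs (X i j - Y i j)]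
    exact pow_le_pow_left₀ (abs_nonneg _) h 2

lemma frob_combo (x s p : Matrix m n ℝ) (b : ℝ) :
    frob (b • x + (1 - b) • s - p) ^ 2 =
      b * frob (x - p) ^ 2 + (1 - b) * frob (s - p) ^ 2 - b * (1 - b) * frob (x - s) ^ 2 := by
  simp only [frob_sq, Matrix.sub_apply, Matrix.add_apply, Matrix.smul_apply, smul_eq_mul,
    Finset.mul_sum, ← Finset.sum_sub_distrib, ← Finset.sum_add_distrib]
  exact Finset.sum_congr rfl fun i _ => Finset.sum_congr rfl fun j _ => by ring


theorem stmt_11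
    (M N R : ℕ) (hM : 0 < M) (hN : 0 < N) (hR : 0 < R)
    (V : Matrix (Fin M) (Fin N) ℝ)
    (W : ℕ → Matrix (Fin M) (Fin R) ℝ) (H : ℕ → Matrix (Fin R) (Fin N) ℝ)
    (α β μ lam : ℕ → ℝ)
    (T : ℕ → Matrix (Fin R) (Fin N) ℝ → Matrix (Fin R) (Fin N) ℝ)
    (S : ℕ → Matrix (Fin M) (Fin R) ℝ → Matrix (Fin M) (Fin R) ℝ)
    (hW0 : matNonneg (W 0)) (hH0 : matNonneg (H 0))
    (hα : ∀ n, α n ∈ Set.Icc (0:ℝ) 1) (hβ : ∀ n, β n ∈ Set.Icc (0:ℝ) 1)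
    (hμ : ∀ n, W n ≠ 0 → 0 < μ n ∧ μ n ≤ 2 / frob ((W n)ᵀ * W n))
    (hT : ∀ n, W n ≠ 0 → ∀ X, T n X = pplus (X - μ n • ((W n)ᵀ * (W n * X - V))))
    (hT0 : ∀ n, W n = 0 → ∀ X, T n X = X)
    (hHrec : ∀ n, H (n + 1) = α n • H n + (1 - α n) • T n (H n))
    (hlam : ∀ n, H (n + 1) ≠ 0 → 0 < lam n ∧ lam n ≤ 2 / frob ((H (n + 1))ᵀ * H (n + 1)))
    (hS : ∀ n, H (n + 1) ≠ 0 → ∀ X, S n X = pplus (X - lam n • ((X * H (n + 1) - V) * (H (n + 1))ᵀ)))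
    (hS0 : ∀ n, H (n + 1) = 0 → ∀ X, S n X = X)
    (hWrec : ∀ n, W (n + 1) = β n • W n + (1 - β n) • S n (W n))
    (m₀ : ℕ)
    (hFixS : ∃ Wf : Matrix (Fin M) (Fin R) ℝ, ∀ n ≥ m₀, S n Wf = Wf)
    (hFixT : ∃ Hf : Matrix (Fin R) (Fin N) ℝ, ∀ n ≥ m₀, T n Hf = Hf)
    :
    ∀ Wf : Matrix (Fin M) (Fin R) ℝ, (∀ n ≥ m₀, S n Wf = Wf) →
      ∀ n ≥ m₀,
        frob (W (n + 1) - Wf) ^ 2 ≤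
          frob (W n - Wf) ^ 2 - β n * (1 - β n) * frob (W n - S n (W n)) ^ 2 ∧
        frob (W (n + 1) - Wf) ≤ frob (W n - Wf) := by
  intro Wf hWf n hn
  have hquasi : frob (S n (W n) - Wf) ≤ frob (W n - Wf) := by
    by_cases hH : H (n + 1) = 0
    · rw [hS0 n hH (W n)]
    · have h1 := hS n hH (W n)
      have h2 : Wf = pplus (Wf - lam n • ((Wf * H (n + 1) - V) * (H (n + 1))ᵀ)) := by
        rw [← hS n hH Wf]; exact (hWf n hn).symm
      have heq :
          (W n - lam n • ((W n * H (n + 1) - V) * (H (n + 1))ᵀ)) -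
            (Wf - lam n • ((Wf * H (n + 1) - V) * (H (n + 1))ᵀ)) =
          (W n - Wf) - lam n • (((W n - Wf) * H (n + 1)) * (H (n + 1))ᵀ) := by
        simp only [Matrix.sub_mul]
        module
      calc frob (S n (W n) - Wf)
          = frob (pplus (W n - lam n • ((W n * H (n + 1) - V) * (H (n + 1))ᵀ)) -
              pplus (Wf - lam n • ((Wf * H (n + 1) - V) * (H (n + 1))ᵀ))) := by
            rw [h1]; nth_rewrite 1 [h2]; rfl
        _ ≤ frob ((W n - lam n • ((W n * H (n + 1) - V) * (H (n + 1))ᵀ)) -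
              (Wf - lam n • ((Wf * H (n + 1) - V) * (H (n + 1))ᵀ))) := pplus_nonexp _ _
        _ = frob ((W n - Wf) - lam n • (((W n - Wf) * H (n + 1)) * (H (n + 1))ᵀ)) := by
            rw [heq]
        _ ≤ frob (W n - Wf) :=
            grad_nonexp (W n - Wf) (H (n + 1)) (lam n) (hlam n hH).1 (hlam n hH).2
  obtain ⟨hb0, hb1⟩ := hβ n
  have hsq : frob (S n (W n) - Wf) ^ 2 ≤ frob (W n - Wf) ^ 2 :=
    pow_le_pow_left₀ (frob_nonneg _) hquasi 2
  have hcombo := frob_combo (W n) (S n (W n)) Wf (β n)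
  have part1 : frob (W (n + 1) - Wf) ^ 2 ≤
      frob (W n - Wf) ^ 2 - β n * (1 - β n) * frob (W n - S n (W n)) ^ 2 := by
    rw [hWrec n, hcombo]
    nlinarith [mul_le_mul_of_nonneg_left hsq (by linarith : (0:ℝ) ≤ 1 - β n)]
  refine ⟨part1, ?_⟩
  have h2 : frob (W (n + 1) - Wf) ^ 2 ≤ frob (W n - Wf) ^ 2 := by
    nlinarith [part1, mul_nonneg (mul_nonneg hb0 (by linarith : (0:ℝ) ≤ 1 - β n)) (sq_nonneg (frob (W n - S n (W n))))]
  exact sq_le_imp_le (frob_nonneg _) h2
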